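/- In the mapping class group of the five-holed sphere S, with boundary components labeled so that δ₁, δ₂, δ₃, ∂₁, ∂₂ are Dehn twists about curves parallel to the five boundary components, and D₁, D₂, D₃, D_∂ are Dehn twists about the four interior curves shown (each D_i encircling ∂₁ together with one of δ₁, δ₂, or ∂₂/δ₃ appropriately, and D_∂ encircling all but ∂₁), the relation ∂₁² ∘ ∂₂ ∘ δ₁ ∘ δ₂ ∘ δ₃ = D_∂ ∘ D₃ ∘ D₂ ∘ D₁ holds; moreover this relation follows from two applications of the classical lantern relation. -/
import Mathlib


/-- Generalized lantern relation in the mapping class group of the five-holed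
sphere (Endo–Mark–Van Horn-Morris), derived from two classical lantern
relations, stated abstractly in a group `G`.  Here `d1,d2,d3` (= δ₁,δ₂,δ₃) and
`p1,p2` (= ∂₁,∂₂) are the Dehn twists about the five boundary-parallel curves
(hence central), `D1,D2,D3,Dp` (= D₁,D₂,D₃,D_∂) are the twists about the four
interior curves, and `C1,C2` are the twists about the auxiliary curves
bounding the two four-holed subspheres: `lantern1` is the lantern relation on
the subsphere containing ∂₁,δ₁,δ₂ and `lantern2` the one on the subsphere
containing ∂₁,∂₂,δ₃; `C1` is disjoint from the curves of `D1` and `D2`.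
Conclusion: ∂₁² ∘ ∂₂ ∘ δ₁ ∘ δ₂ ∘ δ₃ = D_∂ ∘ D₃ ∘ D₂ ∘ D₁. -/
theorem stmt_16 {G : Type*} [Group G]
    (d1 d2 d3 p1 p2 D1 D2 D3 Dp C1 C2 : G)
    (hd1 : ∀ x : G, Commute d1 x) (hd2 : ∀ x : G, Commute d2 x)
    (hd3 : ∀ x : G, Commute d3 x)
    (hp1 : ∀ x : G, Commute p1 x) (hp2 : ∀ x : G, Commute p2 x)
    (lantern1 : p1 * d1 * d2 * C1 = C2 * D2 * D1)
    (lantern2 : p1 * p2 * d3 * C2 = Dp * D3 * C1)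
    (hC1D1 : Commute C1 D1) (hC1D2 : Commute C1 D2) :
    p1 ^ 2 * p2 * d1 * d2 * d3 = Dp * D3 * D2 * D1 := by
  have hC2 : C2 = p1 * d1 * d2 * C1 * D1⁻¹ * D2⁻¹ := by
    rw [eq_mul_inv_iff_mul_eq, eq_mul_inv_iff_mul_eq]; exact lantern1.symm
  have key : p1 * p2 * d3 * (p1 * d1 * d2) = p1 ^ 2 * p2 * d1 * d2 * d3 := by
    calc p1 * p2 * d3 * (p1 * d1 * d2)
        = p1 * p2 * (d3 * (p1 * d1 * d2)) := by group
      _ = p1 * p2 * (p1 * d1 * d2 * d3) := by rw [(hd3 _).eq]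
      _ = p1 * (p2 * (p1 * d1 * d2)) * d3 := by group
      _ = p1 * (p1 * d1 * d2 * p2) * d3 := by rw [(hp2 _).eq]
      _ = p1 * (p1 * d1 * (d2 * p2)) * d3 := by group
      _ = p1 * (p1 * d1 * (p2 * d2)) * d3 := by rw [← (hp2 d2).eq]
      _ = p1 * (p1 * (d1 * p2) * d2) * d3 := by group
      _ = p1 * (p1 * (p2 * d1) * d2) * d3 := by rw [← (hp2 d1).eq]
      _ = p1 ^ 2 * p2 * d1 * d2 * d3 := by rw [sq]; group
  have h := lantern2
  rw [hC2] at h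
  have h1 : p1 * p2 * d3 * (p1 * d1 * d2 * C1 * D1⁻¹ * D2⁻¹)
      = p1 ^ 2 * p2 * d1 * d2 * d3 * D1⁻¹ * D2⁻¹ * C1 := by
    calc p1 * p2 * d3 * (p1 * d1 * d2 * C1 * D1⁻¹ * D2⁻¹)
        = p1 * p2 * d3 * (p1 * d1 * d2 * (C1 * D1⁻¹) * D2⁻¹) := by group
      _ = p1 * p2 * d3 * (p1 * d1 * d2 * (D1⁻¹ * C1) * D2⁻¹) := by
          rw [hC1D1.inv_right.eq]
      _ = p1 * p2 * d3 * (p1 * d1 * d2 * D1⁻¹ * (C1 * D2⁻¹)) := by group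
      _ = p1 * p2 * d3 * (p1 * d1 * d2 * D1⁻¹ * (D2⁻¹ * C1)) := by
          rw [hC1D2.inv_right.eq]
      _ = p1 * p2 * d3 * (p1 * d1 * d2) * D1⁻¹ * D2⁻¹ * C1 := by group
      _ = p1 ^ 2 * p2 * d1 * d2 * d3 * D1⁻¹ * D2⁻¹ * C1 := by rw [key]
  rw [h1] at h
  have h2 := mul_right_cancel h
  rw [← h2]; group
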